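/- Let a, b, k, x, y be integers satisfying a·y + b·x = 1 + a·b. Then a·(k·x − (b − y)) = 1 + x·(k·a − b); in particular a·(k·x − (b − y)) ≡ 1 (mod k·a − b), so that k·x − (b − y) represents the modular inverse of a modulo k·a − b. -/
import Mathlib

theorem inverse_mod_ka_sub_b
    (a b k x y : ℤ) (h : a * y + b * x = 1 + a * b) :
    a * (k * x - (b - y)) = 1 + x * (k * a - b) ∧
    a * (k * x - (b - y)) ≡ 1 [ZMOD k * a - b] := by
  have heq : a * (k * x - (b - y)) = 1 + x * (k * a - b) := by linarith [h]
  refine ⟨heq, Int.ModEq.symm (Int.modEq_iff_dvd.mpr ⟨x, by linarith⟩)⟩
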